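/- Let Y be an integral projective variety over K and R a globally generated line bundle on Y with h^1(Y, R) = 0. Set X := Y × ℙ^1 with projections π_1 : X → Y and π_2 : X → ℙ^1, and for t ∈ ℤ set R⊠(t) := π_1^*(R) ⊗ π_2^*(O_{ℙ^1}(t)). Let Z ⊂ X be a zero-dimensional closed subscheme such that h^1(X, I_Z ⊗ R⊠(z)) = 0 for some z ∈ ℕ, and let e be the minimal such natural number. For t ≥ 0, let μ_t : H^0(π_2^*(O_{ℙ^1}(1))) ⊗ H^0(I_Z ⊗ R⊠(t)) → H^0(I_Z ⊗ R⊠(t+1)) be the multiplication map. Then μ_y is surjective for all integers y > e. -/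

import Mathlib

open Module MvPolynomial
open scoped TensorProduct

namespace MultiProjPaper

/-- `H^0(ℙ^m, O_{ℙ^m}(t))`: the space of degree-`t` homogeneous polynomials in
`K[x_0, …, x_m]` (as a type, to keep typeclass inference manageable). -/
def PmT (K : Type) [Field K] (m t : ℕ) : Type :=
  ↥(homogeneousSubmodule (Fin (m + 1)) K t)

noncomputable instance (K : Type) [Field K] (m t : ℕ) : AddCommGroup (PmT K m t) :=
  inferInstanceAs (AddCommGroup ↥(homogeneousSubmodule (Fin (m + 1)) K t))

noncomputable instance (K : Type) [Field K] (m t : ℕ) : Module K (PmT K m t) :=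
  inferInstanceAs (Module K ↥(homogeneousSubmodule (Fin (m + 1)) K t))

/-- The homogeneous polynomial underlying an element of `H^0(ℙ^m, O(t))`. -/
def PmT.poly {K : Type} [Field K] {m t : ℕ} (g : PmT K m t) :
    MvPolynomial (Fin (m + 1)) K := g.1

lemma PmT.isHomogeneous {K : Type} [Field K] {m t : ℕ} (g : PmT K m t) :
    (PmT.poly g).IsHomogeneous t := g.2

lemma PmT.poly_add {K : Type} [Field K] {m t : ℕ} (g g' : PmT K m t) :
    (g + g').poly = g.poly + g'.poly := rfl

lemma PmT.poly_smul {K : Type} [Field K] {m t : ℕ} (c : K) (g : PmT K m t) :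
    (c • g).poly = c • g.poly := rfl

/-- Model of a zero-dimensional closed subscheme `Z` of `M = Y × ℙ^m`, where `Y` is an
integral projective variety over `K` and `R` is a globally generated line bundle on `Y`
with `h^1(Y, R) = 0` and with space of global sections `V = H^0(Y, R)`.

`Z` is encoded by its (finite-dimensional, commutative) algebra of global functions
`A = H^0(Z, O_Z)` (so `deg Z = dim_K A`), together with:
* `ρ : V → A`, the restriction map `H^0(Y, R) → H^0(Z, R|_Z) ≅ A` (after a trivialization
  of the line bundle `R` on the zero-dimensional scheme `Z`);
* `ξ : Fin (m+1) → A`, the restrictions to `Z` of the homogeneous coordinates of `ℙ^m`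
  (after a trivialization of `O(1)|_Z`).

The field `spanξ` records that the homogeneous coordinates of `ℙ^m` have no common zero
(hence generate the unit ideal on the finite scheme `Z`); the field `spanρ` is the model
counterpart of the hypothesis that `R` is globally generated (its global sections have no
common zero on `Y`, hence generate the unit ideal on `Z`).

By the Künneth formula and the hypothesis `h^1(Y, R) = 0`, for `t ∈ ℕ` one has
`H^0(M, R ⊠ (t)) = H^0(Y, R) ⊗ K[x_0, …, x_m]_t`, the space `H^0(M, 𝓘_Z ⊗ R ⊠ (t))` is
the kernel of the evaluation ("restriction to `Z`") map
`H^0(Y, R) ⊗ K[x_0, …, x_m]_t → A`, `σ ⊗ g ↦ ρ(σ)·g(ξ)`, and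
`h^1(M, 𝓘_Z ⊗ R ⊠ (t)) = dim_K A - rank(evaluation map)`. -/
structure ZeroDimInProd (K : Type) [Field K]
    (V : Type) [AddCommGroup V] [Module K V] (m : ℕ) where
  A : Type
  [instCommRing : CommRing A]
  [instAlgebra : Algebra K A]
  [instFinite : Module.Finite K A]
  ρ : V →ₗ[K] A
  ξ : Fin (m + 1) → A
  spanξ : Ideal.span (Set.range ξ) = ⊤
  spanρ : Ideal.span (Set.range ⇑ρ) = ⊤

attribute [instance] ZeroDimInProd.instCommRing ZeroDimInProd.instAlgebra
  ZeroDimInProd.instFinite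

variable {K : Type} [Field K] {V : Type} [AddCommGroup V] [Module K V] {m : ℕ}

/-- The evaluation (restriction to `Z`) map `H^0(Y,R) × K[x]_t → H^0(Z, O_Z)` as a
bilinear map: `(σ, g) ↦ ρ(σ) · g(ξ)`. -/
noncomputable def evBil (Z : ZeroDimInProd K V m) (t : ℕ) :
    V →ₗ[K] PmT K m t →ₗ[K] Z.A :=
  LinearMap.mk₂ K
    (fun v g => Z.ρ v * (aeval Z.ξ) (PmT.poly g))
    (fun v v' g => by simp [add_mul])
    (fun c v g => by simp [smul_mul_assoc])
    (fun v g g' => by simp [PmT.poly_add, mul_add])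
    (fun c v g => by simp [PmT.poly_smul, mul_smul_comm])

/-- The restriction map `H^0(M, R ⊠ (t)) = H^0(Y,R) ⊗ K[x]_t → H^0(Z, O_Z)`. -/
noncomputable def evMap (Z : ZeroDimInProd K V m) (t : ℕ) :
    (V ⊗[K] PmT K m t) →ₗ[K] Z.A :=
  TensorProduct.lift (evBil Z t)

/-- `H^0(M, 𝓘_Z ⊗ R ⊠ (t))` (for `t ∈ ℕ`). -/
def H0IZ (Z : ZeroDimInProd K V m) (t : ℕ) : Type :=
  ↥(LinearMap.ker (evMap Z t))

noncomputable instance (Z : ZeroDimInProd K V m) (t : ℕ) : AddCommGroup (H0IZ Z t) :=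
  inferInstanceAs (AddCommGroup ↥(LinearMap.ker (evMap Z t)))

noncomputable instance (Z : ZeroDimInProd K V m) (t : ℕ) : Module K (H0IZ Z t) :=
  inferInstanceAs (Module K ↥(LinearMap.ker (evMap Z t)))

/-- `h^0(M, 𝓘_Z ⊗ R ⊠ (t))` (for `t ∈ ℕ`). -/
noncomputable def h0ZP (Z : ZeroDimInProd K V m) (t : ℕ) : ℕ :=
  finrank K (H0IZ Z t)

/-- `h^1(M, 𝓘_Z ⊗ R ⊠ (t))` (for `t ∈ ℕ`): `deg Z` minus the rank of the restriction
map `H^0(M, R ⊠ (t)) → H^0(Z, O_Z)`. -/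
noncomputable def h1ZP (Z : ZeroDimInProd K V m) (t : ℕ) : ℕ :=
  finrank K Z.A - finrank K ↥(LinearMap.range (evMap Z t))

end MultiProjPaper

namespace MultiProjPaper

variable {K : Type} [Field K] {V : Type} [AddCommGroup V] [Module K V]

/-- Multiplication of homogeneous polynomials on `ℙ^m`,
`H^0(O(1)) × H^0(O(t)) → H^0(O(t+1))`, as a bilinear map. -/
noncomputable def polyMulBil (K : Type) [Field K] (m t : ℕ) :
    PmT K m 1 →ₗ[K] PmT K m t →ₗ[K] PmT K m (t + 1) :=
  LinearMap.mk₂ K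
    (fun g h => (⟨PmT.poly g * PmT.poly h, by
      rw [mem_homogeneousSubmodule]
      have := g.isHomogeneous.mul h.isHomogeneous
      simpa only [Nat.add_comm 1 t] using this⟩ : PmT K m (t + 1)))
    (fun g g' h => Subtype.ext (by simp [PmT.poly_add, add_mul]; rfl))
    (fun c g h => Subtype.ext (by simp [PmT.poly_smul, smul_mul_assoc]; rfl))
    (fun g h h' => Subtype.ext (by simp [PmT.poly_add, mul_add]; rfl))
    (fun c g h => Subtype.ext (by simp [PmT.poly_smul, mul_smul_comm]; rfl))

lemma evMap_mul (Z : ZeroDimInProd K V 1) (t : ℕ) (g : PmT K 1 1) :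
    (evMap Z (t + 1)).comp (LinearMap.lTensor V ((polyMulBil K 1 t) g)) =
    (LinearMap.mulLeft K ((aeval Z.ξ) (PmT.poly g))).comp (evMap Z t) := by
  apply TensorProduct.ext'
  intro v h
  have key : PmT.poly ((polyMulBil K 1 t) g h) = PmT.poly g * PmT.poly h := rfl
  simp [evMap, evBil, key]
  ring

/-- The multiplication map
`μ_t : H^0(π_2^*(O_{ℙ^1}(1))) ⊗ H^0(𝓘_Z ⊗ R ⊠ (t)) → H^0(𝓘_Z ⊗ R ⊠ (t+1))`,
`σ ⊗ τ ↦ σ·τ`. -/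
noncomputable def muMap (Z : ZeroDimInProd K V 1) (t : ℕ) :
    (PmT K 1 1 ⊗[K] H0IZ Z t) →ₗ[K] H0IZ Z (t + 1) :=
  LinearMap.codRestrict (LinearMap.ker (evMap Z (t + 1)))
    (TensorProduct.lift (LinearMap.mk₂ K
      (fun (g : PmT K 1 1) (x : H0IZ Z t) =>
        LinearMap.lTensor V ((polyMulBil K 1 t) g) x.1)
      (fun g g' x => by
        show LinearMap.lTensor V ((polyMulBil K 1 t) (g + g')) x.1 = _
        rw [map_add, LinearMap.lTensor_add, LinearMap.add_apply])
      (fun c g x => by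
        show LinearMap.lTensor V ((polyMulBil K 1 t) (c • g)) x.1 = _
        rw [map_smul, LinearMap.lTensor_smul, LinearMap.smul_apply])
      (fun g x x' => by
        show LinearMap.lTensor V ((polyMulBil K 1 t) g) (x.1 + x'.1) = _
        rw [map_add])
      (fun c g x => by
        show LinearMap.lTensor V ((polyMulBil K 1 t) g) (c • x.1) = _
        rw [map_smul])))
    (by
      intro x
      induction x using TensorProduct.induction_on with
      | zero => simp
      | tmul g y =>
          rw [TensorProduct.lift.tmul, LinearMap.mk₂_apply, LinearMap.mem_ker]
          have h1 := LinearMap.congr_fun (evMap_mul Z t g) y.1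
          simp only [LinearMap.comp_apply, LinearMap.mulLeft_apply] at h1
          rw [h1, LinearMap.mem_ker.mp y.2, mul_zero]
      | add x y hx hy => rw [map_add]; exact add_mem hx hy)

end MultiProjPaper

namespace MultiProjPaper

section Aux

variable {K : Type} [Field K] {V : Type} [AddCommGroup V] [Module K V]

/-- The linear form `x₀ + c·x₁` as an element of `H^0(ℙ^1, O(1))`. -/
noncomputable def ell (K : Type) [Field K] (c : K) : PmT K 1 1 :=
  ⟨X 0 + C c * X 1, by
    rw [mem_homogeneousSubmodule]
    exact (isHomogeneous_X K 0).add ((isHomogeneous_X K 1).C_mul c)⟩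

lemma ell_poly (c : K) : (ell K c).poly = X 0 + C c * X 1 := rfl

lemma aeval_ell (Z : ZeroDimInProd K V 1) (c : K) :
    aeval Z.ξ (ell K c).poly = Z.ξ 0 + algebraMap K Z.A c * Z.ξ 1 := by
  simp [ell_poly]

/-- There are two distinct scalars `c ≠ c'` such that the linear forms
`x₀ + c x₁` and `x₀ + c' x₁` both restrict to units on `Z`. -/
lemma exists_unit_pair [Infinite K] (Z : ZeroDimInProd K V 1) :
    ∃ c c' : K, c ≠ c' ∧ IsUnit (aeval Z.ξ (ell K c).poly) ∧
      IsUnit (aeval Z.ξ (ell K c').poly) := by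
  classical
  have hart : IsArtinianRing Z.A := isArtinian_of_tower K inferInstance
  set bad : Set K := {c | ¬ IsUnit (aeval Z.ξ (ell K c).poly)} with hbad
  have hsub : ∀ I : Ideal Z.A, I.IsMaximal →
      ({c : K | aeval Z.ξ (ell K c).poly ∈ I} : Set K).Subsingleton := by
    intro I hI c₁ h₁ c₂ h₂
    simp only [Set.mem_setOf_eq] at h₁ h₂
    by_contra hne
    have hξ1 : Z.ξ 1 ∈ I := by
      have hdiff : algebraMap K Z.A (c₁ - c₂) * Z.ξ 1 ∈ I := by
        have := I.sub_mem h₁ h₂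
        rw [aeval_ell, aeval_ell] at this
        convert this using 1
        rw [map_sub]
        ring
      have := I.mul_mem_left (algebraMap K Z.A (c₁ - c₂)⁻¹) hdiff
      rwa [← mul_assoc, ← map_mul, inv_mul_cancel₀ (sub_ne_zero.mpr hne), map_one,
        one_mul] at this
    have hξ0 : Z.ξ 0 ∈ I := by
      have := I.sub_mem h₁ (I.mul_mem_left (algebraMap K Z.A c₁) hξ1)
      rw [aeval_ell] at this
      simpa using this
    have : Ideal.span (Set.range Z.ξ) ≤ I := by
      rw [Ideal.span_le]
      rintro x ⟨i, rfl⟩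
      fin_cases i
      · exact hξ0
      · exact hξ1
    rw [Z.spanξ] at this
    exact hI.ne_top (top_le_iff.mp this)
  have hbadfin : bad.Finite := by
    have : bad ⊆ ⋃ I ∈ {I : Ideal Z.A | I.IsMaximal}, {c : K | aeval Z.ξ (ell K c).poly ∈ I} := by
      intro c hc
      obtain ⟨I, hI, hmem⟩ := exists_max_ideal_of_mem_nonunits hc
      exact Set.mem_biUnion hI hmem
    exact Set.Finite.subset
      (Set.Finite.biUnion (IsArtinianRing.setOfPred_isMaximal_finite Z.A)
        (fun I hI => ((hsub I hI).finite)))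
      this
  obtain ⟨c, hc⟩ := (hbadfin.infinite_compl).nonempty
  obtain ⟨c', hc'⟩ := ((hbadfin.union (Set.finite_singleton c)).infinite_compl).nonempty
  rw [Set.compl_union, Set.mem_inter_iff] at hc'
  refine ⟨c', c, ?_, not_not.mp hc'.1, not_not.mp hc⟩
  simpa using hc'.2

lemma polyMulBil_poly (m t : ℕ) (g : PmT K m 1) (a : PmT K m t) :
    ((polyMulBil K m t) g a).poly = g.poly * a.poly := rfl

lemma evMap_lTensor (Z : ZeroDimInProd K V 1) (t : ℕ) (g : PmT K 1 1)
    (x : V ⊗[K] PmT K 1 t) :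
    evMap Z (t + 1) (LinearMap.lTensor V ((polyMulBil K 1 t) g) x) =
      aeval Z.ξ g.poly * evMap Z t x := by
  have := LinearMap.congr_fun (evMap_mul Z t g) x
  simpa using this

lemma evMap_surj_succ (Z : ZeroDimInProd K V 1) (t : ℕ) (g : PmT K 1 1)
    (hg : IsUnit (aeval Z.ξ g.poly)) (h : Function.Surjective (evMap Z t)) :
    Function.Surjective (evMap Z (t + 1)) := by
  intro a
  obtain ⟨u, hu⟩ := hg
  obtain ⟨x, hx⟩ := h (((u⁻¹ : Z.Aˣ) : Z.A) * a)
  refine ⟨LinearMap.lTensor V ((polyMulBil K 1 t) g) x, ?_⟩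
  rw [evMap_lTensor, hx, ← hu, Units.mul_inv_cancel_left]

lemma evMap_surj_of_le (Z : ZeroDimInProd K V 1) (g : PmT K 1 1)
    (hg : IsUnit (aeval Z.ξ g.poly)) {e t : ℕ}
    (he : Function.Surjective (evMap Z e)) (h : e ≤ t) :
    Function.Surjective (evMap Z t) := by
  induction t, h using Nat.le_induction with
  | base => exact he
  | succ n hn ih => exact evMap_surj_succ Z n g hg ih

lemma evMap_surj_find (Z : ZeroDimInProd K V 1) (hz : ∃ z : ℕ, h1ZP Z z = 0) :
    Function.Surjective (evMap Z (Nat.find hz)) := by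
  have h := Nat.find_spec hz
  unfold h1ZP at h
  rw [← LinearMap.range_eq_top]
  apply Submodule.eq_top_of_finrank_eq
  have hle := Submodule.finrank_le (LinearMap.range (evMap Z (Nat.find hz)))
  exact le_antisymm hle (Nat.le_of_sub_eq_zero h)

/-- Every homogeneous polynomial of positive degree in two variables decomposes as
`x₀·q₀ + x₁·q₁` with `q₀, q₁` homogeneous of one less degree. -/
lemma exists_X_decomp (y : ℕ) (h : MvPolynomial (Fin 2) K)
    (hh : h.IsHomogeneous (y + 1)) :
    ∃ q₀ q₁ : MvPolynomial (Fin 2) K, q₀.IsHomogeneous y ∧ q₁.IsHomogeneous y ∧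
      h = X 0 * q₀ + X 1 * q₁ := by
  classical
  suffices H : ∀ (s : Finset (Fin 2 →₀ ℕ)) (h : MvPolynomial (Fin 2) K),
      h.support ⊆ s → h.IsHomogeneous (y + 1) →
      ∃ q₀ q₁ : MvPolynomial (Fin 2) K, q₀.IsHomogeneous y ∧ q₁.IsHomogeneous y ∧
        h = X 0 * q₀ + X 1 * q₁ by
    exact H h.support h subset_rfl hh
  intro s
  induction s using Finset.induction_on with
  | empty =>
      intro h hs _
      have h0 : h = 0 := by
        ext d
        by_contra hd
        exact absurd (hs (MvPolynomial.mem_support_iff.mpr (by simpa using hd))) (Finset.notMem_empty d)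
      exact ⟨0, 0, isHomogeneous_zero _ _ _, isHomogeneous_zero _ _ _, by simp [h0]⟩
  | @insert a s ha ih =>
      intro h hs hh
      by_cases hca : coeff a h = 0
      · refine ih h ?_ hh
        intro d hd
        have hdh := MvPolynomial.mem_support_iff.mp hd
        rcases Finset.mem_insert.mp (hs hd) with h1 | h1
        · subst h1; exact absurd hca hdh
        · exact h1
      · set c := coeff a h with hc
        have hA : a.degree = y + 1 := by
          rw [Finsupp.degree_eq_weight_one]
          exact hh hca
        have hmono : (monomial a c).IsHomogeneous (y + 1) := isHomogeneous_monomial c hA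
        have hrest : (h - monomial a c).IsHomogeneous (y + 1) := hh.sub hmono
        have hsupp : (h - monomial a c).support ⊆ s := by
          intro d hd
          rw [MvPolynomial.mem_support_iff, coeff_sub, coeff_monomial] at hd
          by_cases hda : a = d
          · subst hda; simp [← hc] at hd
          · have hdh : coeff d h ≠ 0 := by simpa [hda] using hd
            rcases Finset.mem_insert.mp (hs (MvPolynomial.mem_support_iff.mpr hdh)) with h1 | h1
            · exact absurd h1.symm hda
            · exact h1
        obtain ⟨q₀, q₁, h₀, h₁, heq⟩ := ih _ hsupp hrest
        obtain ⟨i, hi⟩ : ∃ i, a i ≠ 0 := by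
          by_contra hcon
          push_neg at hcon
          have : a = 0 := Finsupp.ext hcon
          rw [this, map_zero] at hA
          omega
        have hle : Finsupp.single i 1 ≤ a := by
          rwa [Finsupp.single_le_iff, Nat.one_le_iff_ne_zero]
        have key : monomial a c = X i * monomial (a - Finsupp.single i 1) c := by
          have hX : (X i : MvPolynomial (Fin 2) K) = monomial (Finsupp.single i 1) 1 := rfl
          rw [hX, monomial_mul, one_mul, add_tsub_cancel_of_le hle]
        have hdeg : (a - Finsupp.single i 1).degree = y := by
          have hadd : Finsupp.single i 1 + (a - Finsupp.single i 1) = a :=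
            add_tsub_cancel_of_le hle
          have h1 : (Finsupp.single i 1 + (a - Finsupp.single i 1)).degree = y + 1 := by
            rw [hadd]; exact hA
          rw [Finsupp.degree_eq_weight_one, map_add] at h1
          have h2 : Finsupp.weight (fun _ => 1 : Fin 2 → ℕ) (Finsupp.single i 1) = 1 := by
            simp [Finsupp.weight_apply, Finsupp.sum_single_index]
          rw [Finsupp.degree_eq_weight_one]
          omega
        have hq : (monomial (a - Finsupp.single i 1) c).IsHomogeneous y :=
          isHomogeneous_monomial c hdeg
        have hsum : h = monomial a c + (h - monomial a c) := by ring
        have hi2 : i = 0 ∨ i = 1 := by fin_cases i <;> simp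
        rcases hi2 with rfl | rfl
        · exact ⟨monomial (a - Finsupp.single 0 1) c + q₀, q₁, hq.add h₀, h₁, by
            rw [hsum, heq, key]; ring⟩
        · exact ⟨q₀, monomial (a - Finsupp.single 1 1) c + q₁, h₀, hq.add h₁, by
            rw [hsum, heq, key]; ring⟩

/-- Decomposition of `H^0(ℙ^1, O(y+1))` via two distinct linear forms. -/
lemma exists_ell_decomp (c c' : K) (hcc : c ≠ c') (y : ℕ) (h : PmT K 1 (y + 1)) :
    ∃ a b : PmT K 1 y,
      h = (polyMulBil K 1 y) (ell K c) a + (polyMulBil K 1 y) (ell K c') b := by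
  obtain ⟨q₀, q₁, h₀, h₁, heq⟩ := exists_X_decomp y h.poly h.isHomogeneous
  set d : K := (c - c')⁻¹ with hd
  have hd' : (C (c - c') * C d : MvPolynomial (Fin 2) K) = 1 := by
    rw [← C_mul, mul_inv_cancel₀ (sub_ne_zero.mpr hcc), C_1]
  refine ⟨⟨C (-c' * d) * q₀ + C d * q₁, ?_⟩, ⟨C (c * d) * q₀ + C (-d) * q₁, ?_⟩, ?_⟩
  · rw [mem_homogeneousSubmodule]
    exact (h₀.C_mul _).add (h₁.C_mul _)
  · rw [mem_homogeneousSubmodule]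
    exact (h₀.C_mul _).add (h₁.C_mul _)
  · apply Subtype.ext
    show h.poly = (X 0 + C c * X 1) * (C (-c' * d) * q₀ + C d * q₁) +
      (X 0 + C c' * X 1) * (C (c * d) * q₀ + C (-d) * q₁)
    rw [heq]
    rw [C_sub] at hd'
    simp only [C_mul, C_neg]
    linear_combination (-(X 0 * q₀) - X 1 * q₁) * hd'

lemma exists_tensor_decomp (c c' : K) (hcc : c ≠ c') (y : ℕ)
    (τ : V ⊗[K] PmT K 1 (y + 1)) :
    ∃ σ w : V ⊗[K] PmT K 1 y,
      τ = LinearMap.lTensor V ((polyMulBil K 1 y) (ell K c)) σ +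
        LinearMap.lTensor V ((polyMulBil K 1 y) (ell K c')) w := by
  set F : (PmT K 1 y × PmT K 1 y) →ₗ[K] PmT K 1 (y + 1) :=
    LinearMap.coprod ((polyMulBil K 1 y) (ell K c)) ((polyMulBil K 1 y) (ell K c')) with hF
  have hFs : Function.Surjective F := by
    intro h
    obtain ⟨a, b, hab⟩ := exists_ell_decomp c c' hcc y h
    exact ⟨(a, b), hab.symm⟩
  obtain ⟨u, hu⟩ := LinearMap.lTensor_surjective V hFs τ
  refine ⟨LinearMap.lTensor V (LinearMap.fst K _ _) u,
    LinearMap.lTensor V (LinearMap.snd K _ _) u, ?_⟩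
  rw [← hu, ← LinearMap.comp_apply, ← LinearMap.comp_apply, ← LinearMap.add_apply,
    ← LinearMap.lTensor_comp, ← LinearMap.lTensor_comp, ← LinearMap.lTensor_add]
  congr 1

lemma polyMulBil_comm (g g' : PmT K 1 1) (s : ℕ) :
    ((polyMulBil K 1 (s + 1)) g).comp ((polyMulBil K 1 s) g') =
    ((polyMulBil K 1 (s + 1)) g').comp ((polyMulBil K 1 s) g) := by
  apply LinearMap.ext
  intro x
  apply Subtype.ext
  show g.poly * (g'.poly * x.poly) = g'.poly * (g.poly * x.poly)
  ring

lemma muMap_tmul (Z : ZeroDimInProd K V 1) (t : ℕ) (g : PmT K 1 1) (x : H0IZ Z t) :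
    ((muMap Z t) (g ⊗ₜ x)).1 = LinearMap.lTensor V ((polyMulBil K 1 t) g) x.1 := rfl

end Aux

/-- Proposition `bg1`(2).
Let `Y` be an integral projective variety over an algebraically closed field `K` of
characteristic `0`, `R` a globally generated line bundle on `Y` with `h^1(Y, R) = 0`,
`X := Y × ℙ^1`, `R ⊠ (t) := π_1^*(R) ⊗ π_2^*(O_{ℙ^1}(t))`. Let `Z ⊂ X` be a
zero-dimensional closed subscheme (modeled, together with the data of `(Y, R)`, by a
`ZeroDimInProd` structure with `V = H^0(Y, R)`) such that `h^1(X, 𝓘_Z ⊗ R ⊠ (z)) = 0`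
for some `z ∈ ℕ`, and let `e` be the minimal such natural number. Then the multiplication
map `μ_y : H^0(π_2^*(O_{ℙ^1}(1))) ⊗ H^0(𝓘_Z ⊗ R ⊠ (y)) → H^0(𝓘_Z ⊗ R ⊠ (y+1))` is
surjective for all `y > e`. -/
theorem statement4 (K : Type) [Field K] [IsAlgClosed K] [CharZero K]
    (V : Type) [AddCommGroup V] [Module K V] [FiniteDimensional K V]
    (Z : ZeroDimInProd K V 1)
    (hz : ∃ z : ℕ, h1ZP Z z = 0) :
    ∀ y : ℕ, Nat.find hz < y → Function.Surjective ⇑(muMap Z y) := by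
  intro y hy
  obtain ⟨s, rfl⟩ : ∃ s, y = s + 1 := ⟨y - 1, by omega⟩
  have hes : Nat.find hz ≤ s := by omega
  obtain ⟨c, c', hcc, hu0, hu1⟩ := exists_unit_pair Z
  have hsurj : ∀ t, Nat.find hz ≤ t → Function.Surjective (evMap Z t) :=
    fun t ht => evMap_surj_of_le Z (ell K c) hu0 (evMap_surj_find Z hz) ht
  rintro ⟨τ, hτ⟩
  have hτ0 : evMap Z (s + 1 + 1) τ = 0 := hτ
  obtain ⟨σ, w, hdec⟩ := exists_tensor_decomp c c' hcc (s + 1) τ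
  obtain ⟨u, hu⟩ := hu1
  obtain ⟨α, hα⟩ := hsurj s hes (((u⁻¹ : Z.Aˣ) : Z.A) * (- evMap Z (s + 1) σ))
  set σ' := σ + LinearMap.lTensor V ((polyMulBil K 1 s) (ell K c')) α with hσ'def
  set w' := w - LinearMap.lTensor V ((polyMulBil K 1 s) (ell K c)) α with hw'def
  have hσ' : evMap Z (s + 1) σ' = 0 := by
    rw [hσ'def, map_add, evMap_lTensor, hα, ← hu, Units.mul_inv_cancel_left]
    abel
  have hcomm : LinearMap.lTensor V ((polyMulBil K 1 (s + 1)) (ell K c))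
        (LinearMap.lTensor V ((polyMulBil K 1 s) (ell K c')) α) =
      LinearMap.lTensor V ((polyMulBil K 1 (s + 1)) (ell K c'))
        (LinearMap.lTensor V ((polyMulBil K 1 s) (ell K c)) α) := by
    have h1 := congrArg (LinearMap.lTensor V) (polyMulBil_comm (ell K c) (ell K c') s)
    rw [LinearMap.lTensor_comp, LinearMap.lTensor_comp] at h1
    exact LinearMap.congr_fun h1 α
  have hτ' : τ = LinearMap.lTensor V ((polyMulBil K 1 (s + 1)) (ell K c)) σ' +
      LinearMap.lTensor V ((polyMulBil K 1 (s + 1)) (ell K c')) w' := by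
    rw [hdec, hσ'def, hw'def, map_add, map_sub, hcomm]
    abel
  have hw' : evMap Z (s + 1) w' = 0 := by
    have h0 := hτ0
    rw [hτ', map_add, evMap_lTensor, evMap_lTensor, hσ', mul_zero, zero_add] at h0
    exact (IsUnit.mul_right_eq_zero ⟨u, hu⟩).mp h0
  refine ⟨(ell K c) ⊗ₜ ⟨σ', LinearMap.mem_ker.mpr hσ'⟩ +
    (ell K c') ⊗ₜ ⟨w', LinearMap.mem_ker.mpr hw'⟩, ?_⟩
  apply Subtype.ext
  show ((muMap Z (s + 1)) (_ + _)).1 = τ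
  rw [map_add]
  show ((muMap Z (s + 1)) _).1 + ((muMap Z (s + 1)) _).1 = τ
  erw [muMap_tmul, muMap_tmul, ← hτ']

end MultiProjPaper
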